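/- arXiv:1312.1445 — 5 statements merged into one kernel-verified Lean document; each statement's English description precedes it below -/
import Mathlib

section
/- Let X and Y be measurable spaces whose σ-algebras are countably generated, let X × Y carry the product σ-algebra with projection π_Y : X × Y → Y, let J be a perfect probability measure on X × Y, and let P_Y = J ∘ π_Y⁻¹ be its marginal on Y. Then there exists a Markov kernel f from Y to X × Y such that f ∘ P_Y = J (i.e. ∫_Y f(D | y) dP_Y(y) = J(D) for every measurable D ⊆ X × Y) and, for all measurable A ⊆ X, B ⊆ Y, C ⊆ Y, ∫_{(A×B)} 1_C(π_Y(x,y)) dJ = ∫_C f(A × B | y) dP_Y(y). -/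
open MeasureTheory ProbabilityTheory
open scoped ENNReal

/-- A probability measure `P` on `Y` is perfect if for every measurable function
`f : Y → ℝ` there exists a Borel set `E ⊆ f(Y)` with `P (f ⁻¹' E) = 1`. -/
def IsPerfect {Y : Type*} [MeasurableSpace Y] (P : Measure Y) : Prop :=
  ∀ f : Y → ℝ, Measurable f →
    ∃ E : Set ℝ, MeasurableSet E ∧ E ⊆ Set.range f ∧ P (f ⁻¹' E) = 1

open MeasurableSpace in
lemma le_comap_mapNatBool (X : Type*) [MeasurableSpace X] [CountablyGenerated X] :
    (inferInstance : MeasurableSpace X) ≤ MeasurableSpace.comap (mapNatBool X) inferInstance := by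
  conv_lhs => rw [← generateFrom_natGeneratingSequence X]
  refine generateFrom_le ?_
  rintro _ ⟨n, rfl⟩
  have hS : MeasurableSet {g : ℕ → Bool | g n = true} :=
    measurable_pi_apply (X := fun _ : ℕ => Bool) n (measurableSet_singleton true)
  refine measurableSet_comap.mpr ⟨{g : ℕ → Bool | g n = true}, hS, ?_⟩
  ext x; simp [mapNatBool]

/-- There is a measurable map to `ℝ` whose comap recovers a countably generated σ-algebra. -/
lemma exists_real_comap (X : Type*) [MeasurableSpace X] [MeasurableSpace.CountablyGenerated X] :
    ∃ φ : X → ℝ, Measurable φ ∧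
      (inferInstance : MeasurableSpace X) ≤ MeasurableSpace.comap φ inferInstance := by
  obtain ⟨e, he⟩ := exists_measurableEmbedding_real (ℕ → Bool)
  refine ⟨e ∘ MeasurableSpace.mapNatBool X,
    he.measurable.comp (MeasurableSpace.measurable_mapNatBool X), ?_⟩
  rw [← MeasurableSpace.comap_comp, he.comap_eq]
  exact le_comap_mapNatBool X

/-- Existence of a regular conditional probability (Markov kernel) `f : Y → X × Y`
disintegrating a perfect joint probability measure `J` over its marginal
`P_Y = J ∘ π_Y⁻¹`. -/
theorem exists_regular_conditional
    {X Y : Type*} [MeasurableSpace X] [MeasurableSpace Y]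
    [MeasurableSpace.CountablyGenerated X] [MeasurableSpace.CountablyGenerated Y]
    (J : Measure (X × Y)) [IsProbabilityMeasure J] (hJ : IsPerfect J) :
    ∃ f : Kernel Y (X × Y), IsMarkovKernel f ∧
      (∀ D : Set (X × Y), MeasurableSet D →
        ∫⁻ y, f y D ∂(J.map Prod.snd) = J D) ∧
      (∀ (A : Set X) (B C : Set Y), MeasurableSet A → MeasurableSet B → MeasurableSet C →
        ∫⁻ p in A ×ˢ B, C.indicator (fun _ => (1 : ℝ≥0∞)) p.2 ∂J
          = ∫⁻ y in C, f y (A ×ˢ B) ∂(J.map Prod.snd)) := by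
  classical
  obtain ⟨φ, hφm, hφle⟩ := exists_real_comap X
  -- the embedding of `X × Y` into `Y × ℝ`
  set Φ : X × Y → Y × ℝ := fun p => (p.2, φ p.1) with hΦdef
  have hΦm : Measurable Φ := measurable_snd.prodMk (hφm.comp measurable_fst)
  have hΦle : (inferInstance : MeasurableSpace (X × Y))
      ≤ MeasurableSpace.comap Φ inferInstance := by
    show Prod.instMeasurableSpace ≤ _
    rw [← generateFrom_prod]
    refine MeasurableSpace.generateFrom_le ?_
    rintro _ ⟨A, hA, B, hB, rfl⟩
    obtain ⟨S, hS, hAS⟩ := MeasurableSpace.measurableSet_comap.mp (hφle _ hA)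
    refine MeasurableSpace.measurableSet_comap.mpr ⟨B ×ˢ S, hB.prod hS, ?_⟩
    ext p
    simp only [Set.mem_preimage, Set.mem_prod, hΦdef, ← hAS]
    tauto
  have hwit : ∀ D : Set (X × Y), MeasurableSet D →
      ∃ D' : Set (Y × ℝ), MeasurableSet D' ∧ Φ ⁻¹' D' = D := by
    intro D hD
    exact MeasurableSpace.measurableSet_comap.mp (hΦle _ hD)
  -- the pushforward measure on `Y × ℝ`
  set ρ : Measure (Y × ℝ) := J.map Φ with hρdef
  have hρprob : IsProbabilityMeasure ρ := Measure.isProbabilityMeasure_map hΦm.aemeasurable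
  set PY : Measure Y := J.map Prod.snd with hPYdef
  have hPYprob : IsProbabilityMeasure PY := Measure.isProbabilityMeasure_map measurable_snd.aemeasurable
  have hfst : ρ.fst = PY := by
    rw [Measure.fst, hρdef, Measure.map_map measurable_fst hΦm]
    rfl
  -- perfectness gives a Borel set `E ⊆ φ(X)` carrying the `ℝ`-marginal
  obtain ⟨E, hE, hErange, hJE⟩ := hJ (fun p => φ p.1) (hφm.comp measurable_fst)
  have hErangeφ : ∀ r ∈ E, ∃ x, φ x = r := by
    intro r hr
    obtain ⟨p, hp⟩ := hErange hr
    exact ⟨p.1, hp⟩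
  have hρE : ρ (Set.univ ×ˢ E) = 1 := by
    rw [hρdef, Measure.map_apply hΦm (MeasurableSet.univ.prod hE)]
    have : Φ ⁻¹' (Set.univ ×ˢ E) = (fun p : X × Y => φ p.1) ⁻¹' E := by
      ext p; simp [hΦdef]
    rw [this, hJE]
  have hEne : E.Nonempty := by
    rcases E.eq_empty_or_nonempty with h | h
    · rw [h] at hρE; simp at hρE
    · exact h
  obtain ⟨e₀, he₀⟩ := hEne
  -- the conditional kernel of `ρ`, corrected on a null set so that it sits on `E` everywhere
  have hκm : Measurable fun y => ρ.condKernel y E := Kernel.measurable_coe _ hE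
  set N : Set Y := {y | ρ.condKernel y E = 1} with hNdef
  have hN : MeasurableSet N := hκm (measurableSet_singleton 1)
  set κ' : Kernel Y ℝ := Kernel.piecewise hN ρ.condKernel
    (Kernel.const Y (Measure.dirac e₀)) with hκ'def
  have hκ'markov : IsMarkovKernel κ' := by
    rw [hκ'def]; infer_instance
  have hint : ∫⁻ y, ρ.condKernel y E ∂PY = 1 := by
    have h1 : (ρ.fst ⊗ₘ ρ.condKernel) (Set.univ ×ˢ E) = ρ (Set.univ ×ˢ E) := by
      rw [ρ.disintegrate ρ.condKernel]
    rw [Measure.compProd_apply (MeasurableSet.univ.prod hE), hfst] at h1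
    have h2 : ∀ y : Y, Prod.mk y ⁻¹' (Set.univ ×ˢ E) = E := by
      intro y; ext r; simp
    simp_rw [h2] at h1
    rw [h1, hρE]
  have hae : ∀ᵐ y ∂PY, ρ.condKernel y E = 1 := by
    have hle : ∀ y, ρ.condKernel y E ≤ 1 := fun y => prob_le_one
    have h0 : ∫⁻ y, (1 - ρ.condKernel y E) ∂PY = 0 := by
      rw [lintegral_sub hκm (by rw [hint]; exact ENNReal.one_ne_top) (Filter.Eventually.of_forall hle)]
      simp [hint]
    have h1 := (lintegral_eq_zero_iff (measurable_const.sub hκm)).mp h0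
    filter_upwards [h1] with y hy
    have : (1 : ℝ≥0∞) ≤ ρ.condKernel y E := tsub_eq_zero_iff_le.mp hy
    exact le_antisymm (hle y) this
  have hκ'E : ∀ y, κ' y E = 1 := by
    intro y
    rw [hκ'def, Kernel.piecewise_apply]
    split_ifs with hy
    · exact hy
    · rw [Kernel.const_apply, Measure.dirac_apply' _ hE, Set.indicator_of_mem he₀]
      rfl
  -- the core integral identity
  have core : ∀ M : Set (Y × ℝ), MeasurableSet M →
      ∫⁻ y, κ' y (Prod.mk y ⁻¹' M) ∂PY = ρ M := by
    intro M hM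
    have h1 : ∫⁻ y, κ' y (Prod.mk y ⁻¹' M) ∂PY
        = ∫⁻ y, ρ.condKernel y (Prod.mk y ⁻¹' M) ∂PY := by
      refine lintegral_congr_ae ?_
      filter_upwards [hae] with y hy
      have hyN : y ∈ N := hy
      rw [hκ'def, Kernel.piecewise_apply, if_pos hyN]
    rw [h1, ← hfst, ← Measure.compProd_apply (μ := ρ.fst) (κ := ρ.condKernel) hM,
      ρ.disintegrate ρ.condKernel]
  -- intersecting with `univ ×ˢ E` does not change `ρ`
  have hfull : ∀ M : Set (Y × ℝ), ρ (M ∩ Set.univ ×ˢ E) = ρ M := by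
    intro M
    refine le_antisymm (measure_mono Set.inter_subset_left) ?_
    calc ρ M ≤ ρ (M ∩ Set.univ ×ˢ E) + ρ (M \ Set.univ ×ˢ E) :=
        measure_le_inter_add_diff _ _ _
      _ ≤ ρ (M ∩ Set.univ ×ˢ E) + ρ ((Set.univ ×ˢ E)ᶜ) := by
          gcongr
          exact Set.diff_subset_compl M _
      _ = ρ (M ∩ Set.univ ×ˢ E) := by
          rw [(prob_compl_eq_zero_iff (MeasurableSet.univ.prod hE)).mpr hρE, add_zero]
  -- the section sets
  set T : Y → Set (X × Y) → Set ℝ :=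
    fun y D => {r | r ∈ E ∧ ∃ x, φ x = r ∧ (x, y) ∈ D} with hTdef
  have hT : ∀ (D' : Set (Y × ℝ)) (y : Y),
      T y (Φ ⁻¹' D') = Prod.mk y ⁻¹' (D' ∩ Set.univ ×ˢ E) := by
    intro D' y
    ext r
    simp only [hTdef, Set.mem_setOf_eq, Set.mem_preimage, Set.mem_inter_iff, Set.mem_prod,
      Set.mem_univ, true_and, hΦdef]
    constructor
    · rintro ⟨hrE, x, rfl, hxD⟩
      exact ⟨hxD, hrE⟩
    · rintro ⟨hD', hrE⟩
      obtain ⟨x, hx⟩ := hErangeφ r hrE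
      exact ⟨hrE, x, hx, by rw [hx]; exact hD'⟩
  -- saturation: membership in a measurable set only depends on `Φ`
  have hsat : ∀ D : Set (X × Y), MeasurableSet D → ∀ p q : X × Y,
      Φ p = Φ q → p ∈ D → q ∈ D := by
    intro D hD p q hpq hp
    obtain ⟨D', _, rfl⟩ := hwit D hD
    rw [Set.mem_preimage] at hp ⊢
    exact hpq ▸ hp
  -- the measures
  set fm : Y → Measure (X × Y) := fun y =>
    Measure.ofMeasurable (fun D _ => κ' y (T y D))
      (by
        show κ' y (T y (∅ : Set (X × Y))) = 0
        have : T y (∅ : Set (X × Y)) = ∅ := by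
          ext r; simp [hTdef]
        rw [this]; simp)
      (by
        intro D hDm hDdisj
        show κ' y (T y (⋃ i, D i)) = ∑' i, κ' y (T y (D i))
        have hU : T y (⋃ i, D i) = ⋃ i, T y (D i) := by
          ext r
          simp only [hTdef, Set.mem_setOf_eq, Set.mem_iUnion]
          constructor
          · rintro ⟨hrE, x, hx, i, hi⟩
            exact ⟨i, hrE, x, hx, hi⟩
          · rintro ⟨i, hrE, x, hx, hi⟩
            exact ⟨hrE, x, hx, ⟨i, hi⟩⟩
        have hmeas : ∀ i, MeasurableSet (T y (D i)) := by
          intro i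
          obtain ⟨D', hD', hpre⟩ := hwit (D i) (hDm i)
          rw [← hpre, hT]
          exact measurable_prodMk_left (hD'.inter (MeasurableSet.univ.prod hE))
        have hdisj : Pairwise (Function.onFun Disjoint fun i => T y (D i)) := by
          intro i j hij
          show Disjoint (T y (D i)) (T y (D j))
          rw [Set.disjoint_left]
          rintro r ⟨hrE, xi, hxi, hxiD⟩ ⟨_, xj, hxj, hxjD⟩
          have hΦeq : Φ (xj, y) = Φ (xi, y) := by
            show (y, φ xj) = (y, φ xi)
            rw [hxj, hxi]
          have : (xi, y) ∈ D j := hsat (D j) (hDm j) _ _ hΦeq hxjD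
          exact Set.disjoint_left.mp (hDdisj hij) hxiD this
        rw [hU]
        exact measure_iUnion hdisj hmeas)
    with hfmdef
  have hfm_apply : ∀ (y : Y) (D : Set (X × Y)) (hD : MeasurableSet D),
      fm y D = κ' y (T y D) := by
    intro y D hD
    rw [hfmdef]
    exact Measure.ofMeasurable_apply D hD
  have hfm_eval : ∀ (D' : Set (Y × ℝ)), MeasurableSet D' → ∀ y,
      fm y (Φ ⁻¹' D') = κ' y (Prod.mk y ⁻¹' (D' ∩ Set.univ ×ˢ E)) := by
    intro D' hD' y
    rw [hfm_apply y _ (hΦm hD'), hT]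
  -- the kernel
  set f : Kernel Y (X × Y) :=
    ⟨fm, by
      refine Measure.measurable_of_measurable_coe fm ?_
      intro D hD
      obtain ⟨D', hD', hpre⟩ := hwit D hD
      have : (fun y => fm y D) =
          fun y => κ' y (Prod.mk y ⁻¹' (D' ∩ Set.univ ×ˢ E)) := by
        funext y
        rw [← hpre, hfm_eval D' hD' y]
      rw [this]
      exact Kernel.measurable_kernel_prodMk_left (hD'.inter (MeasurableSet.univ.prod hE))⟩
    with hfdef
  have hf_apply : ∀ y, f y = fm y := fun _ => rfl
  have hfmarkov : IsMarkovKernel f := by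
    refine ⟨fun y => ⟨?_⟩⟩
    have huniv : (Set.univ : Set (X × Y)) = Φ ⁻¹' Set.univ := rfl
    rw [hf_apply, huniv, hfm_eval _ MeasurableSet.univ y]
    have : Prod.mk y ⁻¹' ((Set.univ : Set (Y × ℝ)) ∩ Set.univ ×ˢ E) = E := by
      ext r; simp
    rw [this, hκ'E]
  refine ⟨f, hfmarkov, ?_, ?_⟩
  · -- first identity
    intro D hD
    obtain ⟨D', hD', hpre⟩ := hwit D hD
    have h1 : ∀ y, f y D = κ' y (Prod.mk y ⁻¹' (D' ∩ Set.univ ×ˢ E)) := by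
      intro y
      rw [hf_apply, ← hpre, hfm_eval D' hD' y]
    simp_rw [h1]
    rw [core _ (hD'.inter (MeasurableSet.univ.prod hE)), hfull D',
      hρdef, Measure.map_apply hΦm hD', hpre]
  · -- second identity
    intro A B C hA hB hC
    obtain ⟨S, hS, hAS⟩ := MeasurableSpace.measurableSet_comap.mp (hφle _ hA)
    have hpre : Φ ⁻¹' (B ×ˢ S) = A ×ˢ B := by
      ext p
      simp only [Set.mem_preimage, hΦdef, Set.mem_prod, ← hAS]
      tauto
    -- LHS equals `J (A ×ˢ (B ∩ C))`
    have hLHS : ∫⁻ p in A ×ˢ B, C.indicator (fun _ => (1 : ℝ≥0∞)) p.2 ∂J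
        = J (A ×ˢ (B ∩ C)) := by
      have hfun : (fun p : X × Y => C.indicator (fun _ => (1 : ℝ≥0∞)) p.2)
          = (Prod.snd ⁻¹' C).indicator (1 : X × Y → ℝ≥0∞) := by
        funext p
        by_cases hp : p.2 ∈ C
        · rw [Set.indicator_of_mem hp, Set.indicator_of_mem (show p ∈ Prod.snd ⁻¹' C from hp)]
          rfl
        · rw [Set.indicator_of_notMem hp,
            Set.indicator_of_notMem (show p ∉ Prod.snd ⁻¹' C from hp)]
      rw [hfun, lintegral_indicator_one (measurable_snd hC),
        Measure.restrict_apply (measurable_snd hC)]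
      congr 1
      ext p
      simp only [Set.mem_inter_iff, Set.mem_preimage, Set.mem_prod]
      tauto
    -- RHS equals `J (A ×ˢ (B ∩ C))` as well
    have hfAB : ∀ y, f y (A ×ˢ B)
        = κ' y (Prod.mk y ⁻¹' (B ×ˢ S ∩ Set.univ ×ˢ E)) := by
      intro y
      rw [hf_apply, ← hpre, hfm_eval _ (hB.prod hS) y]
    have hRHS : ∫⁻ y in C, f y (A ×ˢ B) ∂PY = J (A ×ˢ (B ∩ C)) := by
      set M : Set (Y × ℝ) := B ×ˢ S ∩ Set.univ ×ˢ E with hMdef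
      have hM : MeasurableSet M := (hB.prod hS).inter (MeasurableSet.univ.prod hE)
      have h1 : ∫⁻ y in C, f y (A ×ˢ B) ∂PY
          = ∫⁻ y, C.indicator (fun y => κ' y (Prod.mk y ⁻¹' M)) y ∂PY := by
        rw [lintegral_indicator hC]
        refine setLIntegral_congr_fun hC (fun y _ => ?_)
        rw [hfAB y]
      have h2 : ∀ y, C.indicator (fun y => κ' y (Prod.mk y ⁻¹' M)) y
          = κ' y (Prod.mk y ⁻¹' (C ×ˢ (Set.univ : Set ℝ) ∩ M)) := by
        intro y
        by_cases hy : y ∈ C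
        · rw [Set.indicator_of_mem hy]
          congr 1
          ext r
          simp [hy]
        · rw [Set.indicator_of_notMem hy]
          have : Prod.mk y ⁻¹' (C ×ˢ (Set.univ : Set ℝ) ∩ M) = ∅ := by
            ext r
            simp [hy]
          rw [this, measure_empty]
      rw [h1]
      simp_rw [h2]
      rw [core _ ((hC.prod MeasurableSet.univ).inter hM)]
      have hre : C ×ˢ (Set.univ : Set ℝ) ∩ M
          = (C ×ˢ (Set.univ : Set ℝ) ∩ B ×ˢ S) ∩ Set.univ ×ˢ E := by
        rw [hMdef]
        ext q
        simp only [Set.mem_inter_iff, Set.mem_prod, Set.mem_univ, true_and, and_true]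
        tauto
      rw [hre, hfull, hρdef,
        Measure.map_apply hΦm ((hC.prod MeasurableSet.univ).inter (hB.prod hS))]
      congr 1
      ext p
      simp only [Set.mem_preimage, hΦdef, Set.mem_inter_iff, Set.mem_prod, Set.mem_univ,
        true_and, and_true, ← hAS]
      tauto
    rw [hLHS]
    exact hRHS.symm
end

section
/- Let X and Y be measurable spaces whose σ-algebras are countably generated and let J be a perfect probability measure on X × Y (product σ-algebra) with marginals P_X on X and P_Y on Y. Then there exist Markov kernels I : Y → X and S : X → Y such that for all measurable U ⊆ X and V ⊆ Y, ∫_U S(V | x) dP_X(x) = J(U × V) = ∫_V I(U | y) dP_Y(y). -/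
open MeasureTheory ProbabilityTheory
open scoped ENNReal

/-- Every countably generated measurable space has a measurable real-valued map
generating its σ-algebra. -/
lemma exists_map_real (X : Type*) [mX : MeasurableSpace X]
    [MeasurableSpace.CountablyGenerated X] :
    ∃ f : X → ℝ, Measurable f ∧ mX = MeasurableSpace.comap f inferInstance := by
  obtain ⟨e, he⟩ := exists_measurableEmbedding_real (ℕ → Bool)
  set mb := MeasurableSpace.mapNatBool X
  have hmb : Measurable mb := MeasurableSpace.measurable_mapNatBool X
  refine ⟨e ∘ mb, he.measurable.comp hmb, ?_⟩
  have h1 : MeasurableSpace.comap (e ∘ mb) inferInstance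
      = MeasurableSpace.comap mb inferInstance := by
    rw [← MeasurableSpace.comap_comp, he.comap_eq]
  rw [h1]
  refine le_antisymm ?_ hmb.comap_le
  conv_lhs => rw [← MeasurableSpace.generateFrom_natGeneratingSequence X]
  refine MeasurableSpace.generateFrom_le ?_
  rintro s ⟨n, rfl⟩
  refine ⟨{y : ℕ → Bool | y n = true}, by
    have : Measurable fun y : ℕ → Bool => y n := measurable_pi_apply n
    exact this (MeasurableSet.singleton true), ?_⟩
  ext x
  simp [mb, MeasurableSpace.mapNatBool]

lemma one_sided {X Y : Type*} [mX : MeasurableSpace X] [mY : MeasurableSpace Y]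
    [MeasurableSpace.CountablyGenerated X] [MeasurableSpace.CountablyGenerated Y]
    (J : Measure (X × Y)) [IsProbabilityMeasure J] (hJ : IsPerfect J) :
    ∃ S : Kernel X Y, IsMarkovKernel S ∧ ∀ U V, MeasurableSet U → MeasurableSet V →
      ∫⁻ x in U, S x V ∂(J.map Prod.fst) = J (U ×ˢ V) := by
  obtain ⟨f, hf, hfX⟩ := exists_map_real X
  obtain ⟨g, hg, hgY⟩ := exists_map_real Y
  obtain ⟨E, hE, hEsub, hEfull⟩ := hJ (g ∘ Prod.snd) (hg.comp measurable_snd)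
  haveI : Nonempty (X × Y) := by
    by_contra h
    rw [not_nonempty_iff] at h
    have h1 : J Set.univ = 1 := measure_univ
    rw [Set.univ_eq_empty_iff.mpr h, measure_empty] at h1
    exact zero_ne_one h1
  haveI : Nonempty Y := ⟨(Classical.arbitrary (X × Y)).2⟩
  set y₀ : Y := Classical.arbitrary Y with hy₀
  set ρ : Measure (ℝ × ℝ) := J.map (Prod.map f g) with hρ
  have hfg : Measurable (Prod.map f g) := hf.prodMap hg
  haveI : IsProbabilityMeasure ρ := Measure.isProbabilityMeasure_map hfg.aemeasurable
  -- the section of g over E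
  have hchoice : ∀ t ∈ E, ∃ p : X × Y, g p.2 = t := fun t ht => hEsub ht
  classical
  set hY : ℝ → Y := fun t => if h : t ∈ E then (hchoice t h).choose.2 else y₀ with hhY
  have hkey : ∀ t ∈ E, g (hY t) = t := by
    intro t ht
    simp only [hhY, dif_pos ht]
    exact (hchoice t ht).choose_spec
  have hpre : ∀ B : Set ℝ, hY ⁻¹' (g ⁻¹' B) = (E ∩ B) ∪ {t | t ∉ E ∧ g y₀ ∈ B} := by
    intro B
    ext t
    by_cases h : t ∈ E
    · simp only [Set.mem_preimage, Set.mem_union, Set.mem_inter_iff, Set.mem_setOf_eq, h,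
        true_and, not_true, false_and, or_false]
      rw [hkey t h]
    · have hyt : hY t = y₀ := dif_neg h
      simp [hyt, h]
  have hDmeas : ∀ B : Set ℝ, MeasurableSet B →
      MeasurableSet ((E ∩ B) ∪ {t | t ∉ E ∧ g y₀ ∈ B}) := by
    intro B hB
    exact ((hE.inter hB).union (hE.compl.inter (MeasurableSet.const _)))
  have hYm : Measurable hY := by
    intro s hs
    rw [hfX] at *  -- no-op for Y; we need hgY
    rw [hgY, MeasurableSpace.measurableSet_comap] at hs
    obtain ⟨B, hB, rfl⟩ := hs
    rw [hpre B]
    exact hDmeas B hB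
  set κ := ρ.condKernel with hκ
  refine ⟨Kernel.comap (Kernel.map κ hY) f hf, ?_, ?_⟩
  · haveI : IsMarkovKernel (Kernel.map κ hY) := Kernel.IsMarkovKernel.map κ hYm
    infer_instance
  intro U V hU hV
  have hU' := hU; have hV' := hV
  rw [hfX, MeasurableSpace.measurableSet_comap] at hU'
  rw [hgY, MeasurableSpace.measurableSet_comap] at hV'
  obtain ⟨A, hA, rfl⟩ := hU'
  obtain ⟨B, hB, rfl⟩ := hV'
  set D := (E ∩ B) ∪ {t | t ∉ E ∧ g y₀ ∈ B} with hD
  have hDm : MeasurableSet D := hDmeas B hB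
  -- null set
  have hnull : ρ ((Prod.snd ⁻¹' E)ᶜ) = 0 := by
    rw [← Set.preimage_compl, hρ, Measure.map_apply hfg (measurable_snd hE.compl)]
    have : Prod.map f g ⁻¹' (Prod.snd ⁻¹' Eᶜ) = ((g ∘ Prod.snd) ⁻¹' E)ᶜ := by
      ext p; simp [Prod.map]
    rw [this]
    rw [measure_compl ((hg.comp measurable_snd) hE) (measure_ne_top J _), hEfull, measure_univ,
      tsub_self]
  have hmeq : ∀ C : Set ℝ, MeasurableSet C → (hY ⁻¹' (g ⁻¹' C) ∩ E = C ∩ E) := by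
    intro C _
    rw [hpre C]
    ext t
    by_cases h : t ∈ E <;> simp [h]
  -- step 1 : kernel value
  have hstep1 : ∀ x : X, (Kernel.comap (Kernel.map κ hY) f hf) x (g ⁻¹' B) = κ (f x) D := by
    intro x
    rw [Kernel.comap_apply _ hf, Kernel.map_apply _ hYm, Measure.map_apply hYm hV, hpre B]
  simp_rw [hstep1]
  -- step 2 : change of variables
  have hmap : (J.map Prod.fst).map f = ρ.fst := by
    rw [Measure.fst, hρ, Measure.map_map measurable_fst hfg,
      Measure.map_map hf measurable_fst]
    rfl
  have hκm : Measurable fun t => κ t D := Kernel.measurable_coe κ hDm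
  calc ∫⁻ x in f ⁻¹' A, κ (f x) D ∂(J.map Prod.fst)
      = ∫⁻ t in A, κ t D ∂((J.map Prod.fst).map f) := by
        rw [setLIntegral_map hA hκm hf]
    _ = ρ (A ×ˢ D) := by
        rw [hmap, Measure.setLIntegral_condKernel_eq_measure_prod hA hDm]
    _ = ρ (A ×ˢ B) := by
        have h1 : A ×ˢ D ∩ Prod.snd ⁻¹' E = A ×ˢ (D ∩ E) := by
          ext p; simp [and_assoc]
        have h2 : A ×ˢ B ∩ Prod.snd ⁻¹' E = A ×ˢ (B ∩ E) := by
          ext p; simp [and_assoc]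
        have h3 : D ∩ E = B ∩ E := by
          have := hmeq B hB
          rw [hpre B] at this
          exact this
        calc ρ (A ×ˢ D) = ρ (A ×ˢ D ∩ Prod.snd ⁻¹' E) := (measure_inter_conull hnull).symm
          _ = ρ (A ×ˢ (D ∩ E)) := by rw [h1]
          _ = ρ (A ×ˢ (B ∩ E)) := by rw [h3]
          _ = ρ (A ×ˢ B ∩ Prod.snd ⁻¹' E) := by rw [h2]
          _ = ρ (A ×ˢ B) := measure_inter_conull hnull
    _ = J ((f ⁻¹' A) ×ˢ (g ⁻¹' B)) := by
        rw [hρ, Measure.map_apply hfg (hA.prod hB)]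
        have hh : Prod.map f g ⁻¹' (A ×ˢ B) = (f ⁻¹' A) ×ˢ (g ⁻¹' B) := by
          ext p; simp [Prod.map]
        rw [hh]


/-- Given a perfect joint probability measure `J` on `X × Y` (with `X`, `Y` countably
generated), there exist Markov kernels `S : X → Y` and `I : Y → X` such that
`∫_U S(V | x) dP_X = J (U ×ˢ V) = ∫_V I(U | y) dP_Y` for all measurable `U`, `V`,
where `P_X` and `P_Y` are the marginals of `J`. -/
theorem exists_conditionals_of_joint
    {X Y : Type*} [MeasurableSpace X] [MeasurableSpace Y]
    [MeasurableSpace.CountablyGenerated X] [MeasurableSpace.CountablyGenerated Y]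
    (J : Measure (X × Y)) [IsProbabilityMeasure J] (hJ : IsPerfect J) :
    ∃ (S : Kernel X Y) (I : Kernel Y X), IsMarkovKernel S ∧ IsMarkovKernel I ∧
      ∀ (U : Set X) (V : Set Y), MeasurableSet U → MeasurableSet V →
        (∫⁻ x in U, S x V ∂(J.map Prod.fst) = J (U ×ˢ V) ∧
          J (U ×ˢ V) = ∫⁻ y in V, I y U ∂(J.map Prod.snd)) := by
  obtain ⟨S, hS, hSint⟩ := one_sided J hJ
  have hswap : IsPerfect (J.map Prod.swap) := by
    intro f' hf'
    obtain ⟨E, h1, h2, h3⟩ := hJ (f' ∘ Prod.swap) (hf'.comp measurable_swap)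
    refine ⟨E, h1, ?_, ?_⟩
    · rwa [Function.Surjective.range_comp Prod.swap_surjective f'] at h2
    · rw [Measure.map_apply measurable_swap (hf' h1)]; exact h3
  haveI : IsProbabilityMeasure (J.map Prod.swap) :=
    Measure.isProbabilityMeasure_map measurable_swap.aemeasurable
  obtain ⟨I, hI, hIint⟩ := one_sided (J.map Prod.swap) hswap
  refine ⟨S, I, hS, hI, fun U V hU hV => ⟨hSint U V hU hV, ?_⟩⟩
  have h := hIint V U hV hU
  rw [Measure.map_map measurable_fst measurable_swap] at h
  have h1 : (Prod.fst ∘ Prod.swap : X × Y → Y) = Prod.snd := rfl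
  rw [h1] at h
  rw [Measure.map_apply measurable_swap (hV.prod hU)] at h
  have h2 : (Prod.swap : X × Y → Y × X) ⁻¹' (V ×ˢ U) = U ×ˢ V := by
    ext p; simp [and_comm]
  rw [h2] at h
  exact h.symm
end

section
/- Let X, Y, Z be measurable spaces and let g : Z → Y^X be measurable into the evaluation σ-algebra on Y^X. Then the uncurried map X × Z → Y, (x, z) ↦ (g(z))(x), is measurable with respect to the tensor σ-algebra on X × Z. Together with the currying operation this establishes a bijective correspondence between maps X ⊗ Z → Y measurable for the tensor σ-algebra and measurable maps Z → Y^X. -/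
/-- The tensor σ-algebra on `X × Z`: the largest σ-algebra making every constant
graph map `z ↦ (x, z)` (for `x ∈ X`) and `x ↦ (x, z)` (for `z ∈ Z`) measurable. -/
def tensorSigma {X Z : Type*} (mX : MeasurableSpace X) (mZ : MeasurableSpace Z) :
    MeasurableSpace (X × Z) :=
  (⨅ x : X, MeasurableSpace.map (fun z => (x, z)) mZ) ⊓
    (⨅ z : Z, MeasurableSpace.map (fun x => (x, z)) mX)

/-- `Y^X`: the set of measurable functions from `X` to `Y`. -/
def MeasFn (X Y : Type*) [MeasurableSpace X] [MeasurableSpace Y] :=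
  {f : X → Y // Measurable f}

/-- The evaluation σ-algebra on `Y^X`: the smallest σ-algebra making every
point-evaluation map `f ↦ f x` measurable. -/
def evalSigma (X Y : Type*) [MeasurableSpace X] [mY : MeasurableSpace Y] :
    MeasurableSpace (MeasFn X Y) :=
  ⨆ x : X, MeasurableSpace.comap (fun f : MeasFn X Y => f.1 x) mY


lemma tensor_meas_iff {X Y Z : Type*} [mX : MeasurableSpace X] [mY : MeasurableSpace Y]
    [mZ : MeasurableSpace Z] {F : X × Z → Y} :
    @Measurable (X × Z) Y (tensorSigma mX mZ) mY F ↔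
      (∀ x, Measurable fun z => F (x, z)) ∧ (∀ z, Measurable fun x => F (x, z)) := by
  have hset : ∀ t : Set (X × Z), @MeasurableSet (X × Z) (tensorSigma mX mZ) t ↔
      ((∀ x, MeasurableSet ((fun z => (x, z)) ⁻¹' t)) ∧
        ∀ z, MeasurableSet ((fun x => (x, z)) ⁻¹' t)) := by
    intro t
    constructor
    · intro h
      have h' := MeasurableSpace.measurableSet_inf.mp h
      exact ⟨fun x => MeasurableSpace.measurableSet_iInf.mp h'.1 x,
        fun z => MeasurableSpace.measurableSet_iInf.mp h'.2 z⟩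
    · rintro ⟨h1, h2⟩
      exact MeasurableSpace.measurableSet_inf.mpr
        ⟨MeasurableSpace.measurableSet_iInf.mpr h1, MeasurableSpace.measurableSet_iInf.mpr h2⟩
  constructor
  · intro h
    exact ⟨fun x s hs => ((hset (F ⁻¹' s)).mp (h hs)).1 x,
      fun z s hs => ((hset (F ⁻¹' s)).mp (h hs)).2 z⟩
  · rintro ⟨h1, h2⟩ s hs
    exact (hset (F ⁻¹' s)).mpr ⟨fun x => h1 x hs, fun z => h2 z hs⟩

lemma eval_meas_iff {X Y Z : Type*} [mX : MeasurableSpace X] [mY : MeasurableSpace Y]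
    [mZ : MeasurableSpace Z] {g : Z → MeasFn X Y} :
    @Measurable Z (MeasFn X Y) mZ (evalSigma X Y) g ↔
      ∀ x, Measurable fun z => (g z).1 x := by
  rw [@measurable_iff_comap_le _ _ _ (evalSigma X Y), evalSigma,
    MeasurableSpace.comap_iSup, iSup_le_iff]
  constructor
  · intro h x
    rw [measurable_iff_comap_le]
    calc MeasurableSpace.comap (fun z => (g z).1 x) mY
        = MeasurableSpace.comap g (MeasurableSpace.comap (fun f : MeasFn X Y => f.1 x) mY) := by
          rw [MeasurableSpace.comap_comp]; rfl
      _ ≤ mZ := h x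
  · intro h x
    have := (measurable_iff_comap_le).mp (h x)
    calc MeasurableSpace.comap g (MeasurableSpace.comap (fun f : MeasFn X Y => f.1 x) mY)
        = MeasurableSpace.comap (fun z => (g z).1 x) mY := by
          rw [MeasurableSpace.comap_comp]; rfl
      _ ≤ mZ := this

/-- If `g : Z → Y^X` is measurable for the evaluation σ-algebra, then the uncurried
map `(x, z) ↦ (g z) x` is measurable for the tensor σ-algebra on `X × Z`; together
with currying this sets up a bijective correspondence between tensor-measurable
maps `X ⊗ Z → Y` and measurable maps `Z → Y^X`. -/
theorem uncurry_measurable_and_bijective_correspondence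
    {X Y Z : Type*} [mX : MeasurableSpace X] [mY : MeasurableSpace Y]
    [mZ : MeasurableSpace Z] :
    (∀ g : Z → MeasFn X Y, @Measurable Z (MeasFn X Y) mZ (evalSigma X Y) g →
      @Measurable (X × Z) Y (tensorSigma mX mZ) mY (fun p => (g p.2).1 p.1)) ∧
    ∃ e : {F : X × Z → Y // @Measurable (X × Z) Y (tensorSigma mX mZ) mY F} ≃
        {g : Z → MeasFn X Y // @Measurable Z (MeasFn X Y) mZ (evalSigma X Y) g},
      ∀ (F : {F : X × Z → Y // @Measurable (X × Z) Y (tensorSigma mX mZ) mY F})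
        (z : Z) (x : X), ((e F).1 z).1 x = F.1 (x, z) := by
  have uncurry : ∀ g : Z → MeasFn X Y, @Measurable Z (MeasFn X Y) mZ (evalSigma X Y) g →
      @Measurable (X × Z) Y (tensorSigma mX mZ) mY (fun p => (g p.2).1 p.1) := by
    intro g hg
    exact tensor_meas_iff.mpr ⟨fun x => eval_meas_iff.mp hg x, fun z => (g z).2⟩
  refine ⟨uncurry, ⟨{
    toFun := fun F => ⟨fun z => ⟨fun x => F.1 (x, z), (tensor_meas_iff.mp F.2).2 z⟩,
      eval_meas_iff.mpr fun x => (tensor_meas_iff.mp F.2).1 x⟩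
    invFun := fun g => ⟨fun p => (g.1 p.2).1 p.1, uncurry g.1 g.2⟩
    left_inv := fun F => rfl
    right_inv := fun g => rfl }, fun F z x => rfl⟩⟩
end

section
/- Let X and Y be measurable spaces and Y^X the set of measurable functions from X to Y with the evaluation σ-algebra. The class of subsets of Y^X consisting of the empty set together with all finite intersections ⋂_{i=1}^n ev_{x_i}⁻¹(A_i), where {x_1, …, x_n} is a separated subset of X and each A_i is a nonempty proper measurable subset of Y, is a π-system, and it generates the evaluation σ-algebra on Y^X. -/
/-- A subset `S` of a measurable space is separated if any two distinct points of
`S` can be separated by a measurable set. -/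
def Separated {X : Type*} [MeasurableSpace X] (S : Set X) : Prop :=
  ∀ x ∈ S, ∀ y ∈ S, x ≠ y → ∃ B : Set X, MeasurableSet B ∧ x ∈ B ∧ y ∉ B

/-- The class `𝓔` of subsets of `Y^X`: the empty set together with all finite
intersections `⋂ i, ev_{x i}⁻¹ (A i)` where `{x 1, …, x n}` is a separated subset of
`X` and each `A i` is a nonempty proper measurable subset of `Y`. -/
def evalPiSystem (X Y : Type*) [MeasurableSpace X] [MeasurableSpace Y] :
    Set (Set (MeasFn X Y)) :=
  {∅} ∪ {s | ∃ n : ℕ, 0 < n ∧ ∃ (x : Fin n → X) (A : Fin n → Set Y),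
    Separated (Set.range x) ∧
    (∀ i, MeasurableSet (A i) ∧ (A i).Nonempty ∧ A i ≠ Set.univ) ∧
    s = ⋂ i, (fun f : MeasFn X Y => f.1 (x i)) ⁻¹' A i}


open Set MeasurableSpace

section Aux
variable {X Y : Type*} [mX : MeasurableSpace X] [mY : MeasurableSpace Y]

/-- Two points are inseparable if every measurable set contains both or neither. -/
def InSep {X : Type*} [MeasurableSpace X] (x y : X) : Prop :=
  ∀ B : Set X, MeasurableSet B → (x ∈ B ↔ y ∈ B)

lemma insep_mem {x x' : X} (h : InSep x x') (f : MeasFn X Y) {A : Set Y}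
    (hA : MeasurableSet A) : f.1 x ∈ A ↔ f.1 x' ∈ A :=
  h (f.1 ⁻¹' A) (f.2 hA)

lemma not_insep_sep {x y : X} (h : ¬ InSep x y) :
    ∃ B : Set X, MeasurableSet B ∧ x ∈ B ∧ y ∉ B := by
  simp only [InSep, not_forall] at h
  obtain ⟨B, hB, hxy⟩ := h
  rcases Classical.em (x ∈ B) with hx | hx
  · exact ⟨B, hB, hx, fun hy => hxy ⟨fun _ => hy, fun _ => hx⟩⟩
  · refine ⟨Bᶜ, hB.compl, hx, fun hy => ?_⟩
    have hyB : y ∉ B := hy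
    exact hxy ⟨fun h' => absurd h' hx, fun h' => absurd h' hyB⟩

lemma inter_mem_evalPiSystem {n : ℕ} (hn : 0 < n) (x : Fin n → X)
    (A : Fin n → Set Y)
    (hA : ∀ i, MeasurableSet (A i) ∧ (A i).Nonempty ∧ A i ≠ Set.univ) :
    (⋂ i, (fun f : MeasFn X Y => f.1 (x i)) ⁻¹' A i) ∈ evalPiSystem X Y := by
  classical
  let r : Setoid (Fin n) :=
    ⟨fun i j => InSep (x i) (x j),
     ⟨fun i B hB => Iff.rfl, fun h B hB => (h B hB).symm,
      fun h1 h2 B hB => (h1 B hB).trans (h2 B hB)⟩⟩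
  letI : Fintype (Quotient r) := Fintype.ofFinite _
  let C : Quotient r → Set Y := fun q => ⋂ i : {i : Fin n // Quotient.mk r i = q}, A i
  have hCmeas : ∀ q, MeasurableSet (C q) := fun q =>
    MeasurableSet.iInter fun i => (hA i).1
  have hCsub : ∀ q, C q ⊆ A (Quotient.out q) := fun q =>
    iInter_subset _ (⟨Quotient.out q, Quotient.out_eq q⟩ : {i : Fin n // Quotient.mk r i = q})
  have key : (⋂ i, (fun f : MeasFn X Y => f.1 (x i)) ⁻¹' A i) =
      ⋂ q : Quotient r, (fun f : MeasFn X Y => f.1 (x (Quotient.out q))) ⁻¹' C q := by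
    ext f
    simp only [mem_iInter, mem_preimage, C, Subtype.forall]
    constructor
    · intro h q i hi
      have hsep : InSep (x i) (x (Quotient.out q)) :=
        Quotient.exact (hi.trans (Quotient.out_eq q).symm)
      exact (insep_mem hsep f (hA i).1).mp (h i)
    · intro h i
      have hsep : InSep (x i) (x (Quotient.out (Quotient.mk r i))) :=
        Quotient.exact (Quotient.out_eq (Quotient.mk r i)).symm
      exact (insep_mem hsep f (hA i).1).mpr (h (Quotient.mk r i) i rfl)
  by_cases hC : ∀ q : Quotient r, (C q).Nonempty
  · have hQne : Nonempty (Quotient r) := ⟨Quotient.mk r ⟨0, hn⟩⟩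
    have hm : 0 < Fintype.card (Quotient r) := Fintype.card_pos
    let e : Fin (Fintype.card (Quotient r)) ≃ Quotient r := (Fintype.equivFin _).symm
    refine Or.inr ⟨Fintype.card (Quotient r), hm,
      fun k => x (Quotient.out (e k)), fun k => C (e k), ?_, ?_, ?_⟩
    · rintro a ⟨k, rfl⟩ b ⟨l, rfl⟩ hab
      have hkl : ¬ InSep (x (Quotient.out (e k))) (x (Quotient.out (e l))) := by
        intro h
        apply hab
        have hekl : e k = e l := by
          rw [← Quotient.out_eq (e k), ← Quotient.out_eq (e l)]
          exact Quotient.sound h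
        exact congrArg (fun q => x (Quotient.out q)) hekl
      exact not_insep_sep hkl
    · intro k
      refine ⟨hCmeas _, hC _, fun h => ?_⟩
      exact (hA (Quotient.out (e k))).2.2 (univ_subset_iff.mp (h ▸ hCsub (e k)))
    · rw [key]
      ext f
      simp only [mem_iInter, mem_preimage]
      constructor
      · intro h k
        exact h (e k)
      · intro h q
        have := h (e.symm q)
        rwa [e.apply_symm_apply] at this
  · push_neg at hC
    obtain ⟨q, hq⟩ := hC
    left
    rw [mem_singleton_iff, key]
    refine eq_empty_of_subset_empty fun f hf => ?_
    have := mem_iInter.mp hf q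
    rw [hq] at this
    exact this

end Aux

/-- The class `𝓔` is a π-system and generates the evaluation σ-algebra on `Y^X`. -/
theorem evalPiSystem_isPiSystem_generates
    {X Y : Type*} [mX : MeasurableSpace X] [mY : MeasurableSpace Y] :
    IsPiSystem (evalPiSystem X Y) ∧
    MeasurableSpace.generateFrom (evalPiSystem X Y) = evalSigma X Y := by
  constructor
  · intro s hs t ht hst
    rcases hs with hs | ⟨n, hn, xs, As, _, hAs, rfl⟩
    · rw [Set.mem_singleton_iff] at hs
      subst hs
      simp at hst
    rcases ht with ht | ⟨m, hm, xt, At, _, hAt, rfl⟩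
    · rw [Set.mem_singleton_iff] at ht
      subst ht
      simp at hst
    have hpos : 0 < n + m := Nat.lt_of_lt_of_le hn (Nat.le_add_right n m)
    have heq : (⋂ i, (fun f : MeasFn X Y => f.1 (xs i)) ⁻¹' As i) ∩
        (⋂ j, (fun f : MeasFn X Y => f.1 (xt j)) ⁻¹' At j) =
        ⋂ k : Fin (n + m),
          (fun f : MeasFn X Y => f.1 (Fin.addCases xs xt k)) ⁻¹' (Fin.addCases As At k) := by
      ext f
      simp only [Set.mem_inter_iff, Set.mem_iInter, Set.mem_preimage]
      constructor
      · rintro ⟨h1, h2⟩ k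
        refine Fin.addCases (fun i => ?_) (fun j => ?_) k
        · simpa using h1 i
        · simpa using h2 j
      · intro h
        exact ⟨fun i => by simpa using h (Fin.castAdd m i),
               fun j => by simpa using h (Fin.natAdd n j)⟩
    rw [heq]
    refine inter_mem_evalPiSystem hpos _ _ ?_
    intro k
    refine Fin.addCases (fun i => ?_) (fun j => ?_) k
    · simpa using hAs i
    · simpa using hAt j
  · apply le_antisymm
    · refine MeasurableSpace.generateFrom_le ?_
      rintro s (hs | ⟨n, hn, xs, As, _, hAs, rfl⟩)
      · rw [Set.mem_singleton_iff] at hs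
        subst hs
        exact @MeasurableSet.empty _ (evalSigma X Y)
      · refine MeasurableSet.iInter fun i => ?_
        have hle : MeasurableSpace.comap (fun f : MeasFn X Y => f.1 (xs i)) mY ≤
            evalSigma X Y :=
          le_iSup (fun x => MeasurableSpace.comap (fun f : MeasFn X Y => f.1 x) mY) (xs i)
        exact hle _ ⟨As i, (hAs i).1, rfl⟩
    · refine iSup_le fun x0 => ?_
      intro s hs
      obtain ⟨A, hAmeas, rfl⟩ := hs
      by_cases hAe : A = ∅
      · subst hAe
        simpa using @MeasurableSet.empty _ (MeasurableSpace.generateFrom (evalPiSystem X Y))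
      by_cases hAu : A = Set.univ
      · subst hAu
        simpa using @MeasurableSet.univ _ (MeasurableSpace.generateFrom (evalPiSystem X Y))
      refine MeasurableSpace.measurableSet_generateFrom
        (Or.inr ⟨1, one_pos, fun _ => x0, fun _ => A, ?_, ?_, ?_⟩)
      · rintro a ⟨i, rfl⟩ b ⟨j, rfl⟩ hab
        exact absurd rfl hab
      · exact fun _ => ⟨hAmeas, Set.nonempty_iff_ne_empty.mpr hAe, hAu⟩
      · exact (Set.iInter_const _).symm
end

section
/- Let X be a set, let x_0, …, x_{N-1} ∈ X, y_0, …, y_{N-1} ∈ ℝ, let m⁰ : X → ℝ and let k⁰ : X × X → ℝ be symmetric. Define recursively for i = 0, …, N−1 (assuming k^i(x_i, x_i) ≠ 0 at each step): m^{i+1}(z) = m^i(z) + (k^i(z, x_i)/k^i(x_i, x_i))·(y_i − m^i(x_i)) and k^{i+1}(w, z) = k^i(w, z) − k^i(w, x_i)·k^i(x_i, z)/k^i(x_i, x_i). If the N×N Gram matrix K with entries K_{jl} = k⁰(x_j, x_l) is invertible, then for all w, z ∈ X: m^N(z) = m⁰(z) + K(z, X₀)·K⁻¹·(y − m⁰(X₀))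 and k^N(w, z) = k⁰(w, z) − K(w, X₀)·K⁻¹·K(X₀, z), where K(z, X₀) is the row vector with entries k⁰(z, x_j), K(X₀, z) is the column vector with entries k⁰(x_j, z), y = (y_0, …, y_{N-1})ᵀ and m⁰(X₀) = (m⁰(x_0), …, m⁰(x_{N-1}))ᵀ. -/
open Matrix

/-- The recursive single-measurement Gaussian-process posterior updates of the mean
and covariance functions, iterated over measurements `(x i, y i)` for
`i = 0, …, N−1`, agree with the batch formulas using the inverse of the Gram matrix
`K` of the initial covariance `k⁰` on the measurement points. -/
theorem gp_recursive_update_eq_batch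
    {X : Type*} (N : ℕ) (x : Fin N → X) (y : Fin N → ℝ)
    (m : ℕ → X → ℝ) (k : ℕ → X → X → ℝ)
    (hsym : ∀ w z : X, k 0 w z = k 0 z w)
    (hne : ∀ i : Fin N, k (i : ℕ) (x i) (x i) ≠ 0)
    (hm : ∀ i : Fin N, ∀ z : X, m ((i : ℕ) + 1) z =
      m (i : ℕ) z + k (i : ℕ) z (x i) / k (i : ℕ) (x i) (x i) * (y i - m (i : ℕ) (x i)))
    (hk : ∀ i : Fin N, ∀ w z : X, k ((i : ℕ) + 1) w z =
      k (i : ℕ) w z - k (i : ℕ) w (x i) * k (i : ℕ) (x i) z / k (i : ℕ) (x i) (x i))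
    (K : Matrix (Fin N) (Fin N) ℝ) (hK : ∀ j l : Fin N, K j l = k 0 (x j) (x l))
    (hKinv : IsUnit K.det) :
    ∀ w z : X,
      m N z = m 0 z + (fun j => k 0 z (x j)) ⬝ᵥ (K⁻¹ *ᵥ fun j => y j - m 0 (x j)) ∧
      k N w z = k 0 w z - (fun j => k 0 w (x j)) ⬝ᵥ (K⁻¹ *ᵥ fun j => k 0 (x j) z) := by
  have hKsym : ∀ j l : Fin N, K j l = K l j := by
    intro j l; rw [hK, hK, hsym]
  -- the key invariant
  have key : ∀ i : ℕ, i ≤ N → ∃ B : Matrix (Fin N) (Fin N) ℝ,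
      (∀ j l : Fin N, B j l = B l j) ∧
      (∀ j l : Fin N, i ≤ (j : ℕ) ∨ i ≤ (l : ℕ) → B j l = 0) ∧
      (∀ j l : Fin N, (j : ℕ) < i → (l : ℕ) < i →
        ∑ l', B j l' * K l' l = if j = l then 1 else 0) ∧
      (∀ z, m i z = m 0 z + ∑ j, ∑ l, k 0 z (x j) * B j l * (y l - m 0 (x l))) ∧
      (∀ w z, k i w z = k 0 w z - ∑ j, ∑ l, k 0 w (x j) * B j l * k 0 (x l) z) := by
    intro i
    induction i with
    | zero =>
      intro _
      refine ⟨0, by simp, by simp, by omega, ?_, ?_⟩ <;> simp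
    | succ i IH =>
      intro hiN'
      have hiN : i < N := hiN'
      obtain ⟨B, hBsym, hBsupp, hBK, hm_i, hk_i⟩ := IH (Nat.le_of_lt hiN)
      set fi : Fin N := ⟨i, hiN⟩ with hfi
      have hmfi : ∀ z, m (i + 1) z =
          m i z + k i z (x fi) / k i (x fi) (x fi) * (y fi - m i (x fi)) := hm fi
      have hkfi : ∀ w z, k (i + 1) w z =
          k i w z - k i w (x fi) * k i (x fi) z / k i (x fi) (x fi) := hk fi
      set d : ℝ := k i (x fi) (x fi) with hdd
      have hd : d ≠ 0 := hne fi
      set u : Fin N → ℝ := fun j => (if j = fi then 1 else 0) - ∑ l, B j l * K l fi with hu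
      have hBrow : ∀ j l : Fin N, i ≤ (j : ℕ) → B j l = 0 := fun j l h => hBsupp j l (Or.inl h)
      have hu_hi : ∀ j : Fin N, i ≤ (j : ℕ) → u j = if j = fi then 1 else 0 := by
        intro j hj
        simp only [hu]
        rw [Finset.sum_eq_zero fun l _ => by rw [hBrow j l hj, zero_mul]]
        ring
      have hufi : u fi = 1 := by rw [hu_hi fi le_rfl, if_pos rfl]
      -- swap lemma: ∑∑ K fi j * B j l * c l = ∑ (∑ B l l' * K l' fi) * c l
      have hswap : ∀ c : Fin N → ℝ,
          ∑ j, ∑ l, K fi j * B j l * c l = ∑ l, (∑ l', B l l' * K l' fi) * c l := by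
        intro c
        rw [Finset.sum_comm]
        refine Finset.sum_congr rfl fun l _ => ?_
        rw [Finset.sum_mul]
        refine Finset.sum_congr rfl fun j _ => ?_
        rw [hKsym fi j, hBsym j l]; ring
      -- u-form of k i (· , x fi) and k i (x fi, ·)
      have hkiw : ∀ w, k i w (x fi) = ∑ j, k 0 w (x j) * u j := by
        intro w
        rw [hk_i w (x fi)]
        simp only [hu, mul_sub, Finset.sum_sub_distrib, mul_ite, mul_one, mul_zero]
        rw [Finset.sum_ite_eq' Finset.univ fi (fun j => k 0 w (x j))]
        simp only [Finset.mem_univ, if_true]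
        congr 1
        refine Finset.sum_congr rfl fun j _ => ?_
        rw [Finset.mul_sum]
        refine Finset.sum_congr rfl fun l _ => ?_
        rw [hK l fi]; ring
      have hkiz : ∀ z, k i (x fi) z = ∑ l, u l * k 0 (x l) z := by
        intro z
        rw [hk_i (x fi) z]
        have h1 : ∀ j l : Fin N, k 0 (x fi) (x j) * B j l * k 0 (x l) z
            = K fi j * B j l * k 0 (x l) z := by intro j l; rw [← hK]
        simp only [h1]
        rw [hswap]
        simp only [hu, sub_mul, Finset.sum_sub_distrib, ite_mul, one_mul, zero_mul]
        rw [Finset.sum_ite_eq' Finset.univ fi (fun l => k 0 (x l) z)]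
        simp only [Finset.mem_univ, if_true]
        try ring
      have hyr : y fi - m i (x fi) = ∑ l, u l * (y l - m 0 (x l)) := by
        rw [hm_i (x fi)]
        have h1 : ∀ j l : Fin N, k 0 (x fi) (x j) * B j l * (y l - m 0 (x l))
            = K fi j * B j l * (y l - m 0 (x l)) := by intro j l; rw [← hK]
        simp only [h1]
        rw [hswap]
        simp only [hu, sub_mul, Finset.sum_sub_distrib, ite_mul, one_mul, zero_mul]
        rw [Finset.sum_ite_eq' Finset.univ fi (fun l => y l - m 0 (x l))]
        simp only [Finset.mem_univ, if_true]
        try ring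
      -- K *ᵥ u vanishes below i
      have hKu0 : ∀ μ : Fin N, (μ : ℕ) < i → ∑ j, K μ j * u j = 0 := by
        intro μ hμ
        simp only [hu, mul_sub, Finset.sum_sub_distrib, mul_ite, mul_one, mul_zero]
        rw [Finset.sum_ite_eq' Finset.univ fi (fun j => K μ j)]
        simp only [Finset.mem_univ, if_true]
        have h2 : ∑ j, K μ j * ∑ l, B j l * K l fi
            = ∑ l, (∑ j, K μ j * B j l) * K l fi := by
          simp only [Finset.mul_sum]
          rw [Finset.sum_comm]
          refine Finset.sum_congr rfl fun l _ => ?_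
          rw [Finset.sum_mul]
          refine Finset.sum_congr rfl fun j _ => ?_; ring
        rw [h2]
        have h3 : ∀ l : Fin N, (∑ j, K μ j * B j l) = if l = μ then 1 else 0 := by
          intro l
          by_cases hl : (l : ℕ) < i
          · rw [← hBK l μ hl hμ]
            refine Finset.sum_congr rfl fun j _ => ?_
            rw [hKsym μ j, hBsym j l]; ring
          · rw [Finset.sum_eq_zero fun j _ => by
                rw [hBsym j l, hBrow l j (le_of_not_gt hl), mul_zero]]
            rw [if_neg (by rintro rfl; exact hl hμ)]
        simp only [h3, ite_mul, one_mul, zero_mul]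
        rw [Finset.sum_ite_eq' Finset.univ μ (fun l => K l fi)]
        simp only [Finset.mem_univ, if_true]
        rw [hKsym μ fi]; ring
      -- d = (K *ᵥ u) at fi
      have hKud : ∑ l, K fi l * u l = d := by
        rw [hdd, hkiz (x fi)]
        refine (Finset.sum_congr rfl fun l _ => ?_).symm
        rw [hK fi l, hsym]; ring
      -- the new matrix
      refine ⟨Matrix.of fun j l => B j l + u j * u l / d, ?_, ?_, ?_, ?_, ?_⟩
      · intro j l; simp only [Matrix.of_apply]; rw [hBsym j l]; ring
      · intro j l hjl
        simp only [Matrix.of_apply]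
        have hjl' : i + 1 ≤ (j : ℕ) ∨ i + 1 ≤ (l : ℕ) := hjl
        have huz : ∀ a : Fin N, i + 1 ≤ (a : ℕ) → u a = 0 := by
          intro a ha
          rw [hu_hi a (Nat.le_of_succ_le ha), if_neg]
          intro h; rw [h] at ha; simp only [hfi] at ha; omega
        rcases hjl' with h | h
        · rw [hBrow j l (Nat.le_of_succ_le h), huz j h]; ring
        · rw [hBsupp j l (Or.inr (Nat.le_of_succ_le h)), huz l h]; ring
      · intro j l hj hl
        simp only [Matrix.of_apply, add_mul, Finset.sum_add_distrib]
        have h2 : ∑ l', u j * u l' / d * K l' l = u j * (∑ l', K l l' * u l') / d := by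
          rw [Finset.mul_sum, Finset.sum_div]
          refine Finset.sum_congr rfl fun l' _ => ?_
          rw [hKsym l l']; ring
        rw [h2]
        have hj' : (j : ℕ) < i ∨ j = fi := by
          rcases Nat.lt_succ_iff_lt_or_eq.mp hj with h | h
          · exact Or.inl h
          · exact Or.inr (Fin.ext h)
        have hl' : (l : ℕ) < i ∨ l = fi := by
          rcases Nat.lt_succ_iff_lt_or_eq.mp hl with h | h
          · exact Or.inl h
          · exact Or.inr (Fin.ext h)
        rcases hj' with hj1 | hj1 <;> rcases hl' with hl1 | hl1
        · rw [hBK j l hj1 hl1, hKu0 l hl1]; ring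
        · subst hl1
          rw [hKud]
          have : u j = (if j = fi then 1 else 0) - ∑ l', B j l' * K l' fi := rfl
          rw [if_neg (by intro h; rw [h] at hj1; simp only [hfi] at hj1; omega)] at this
          rw [if_neg (by intro h; rw [h] at hj1; simp only [hfi] at hj1; omega)]
          field_simp
          linarith [this]
        · subst hj1
          rw [hKu0 l hl1, Finset.sum_eq_zero fun l' _ => by
            rw [hBrow fi l' le_rfl, zero_mul]]
          rw [if_neg (by intro h; rw [← h] at hl1; simp only [hfi] at hl1; omega)]
          ring
        · subst hj1; subst hl1
          rw [hKud, hufi, Finset.sum_eq_zero fun l' _ => by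
            rw [hBrow fi l' le_rfl, zero_mul], if_pos rfl]
          field_simp
          ring
      · intro z
        rw [hmfi z, hm_i z, hkiw z, hyr]
        have expand : ∀ a c : Fin N → ℝ,
            ∑ j, ∑ l, a j * (B j l + u j * u l / d) * c l
            = (∑ j, ∑ l, a j * B j l * c l) + (∑ j, a j * u j) * (∑ l, u l * c l) / d := by
          intro a c
          have h1 : ∀ j : Fin N, ∑ l, a j * (B j l + u j * u l / d) * c l
              = (∑ l, a j * B j l * c l) + (a j * u j / d) * (∑ l, u l * c l) := by
            intro j
            rw [Finset.mul_sum, ← Finset.sum_add_distrib]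
            refine Finset.sum_congr rfl fun l _ => ?_; ring
          simp only [h1]
          rw [Finset.sum_add_distrib, ← Finset.sum_mul]
          congr 1
          rw [← Finset.sum_div, div_mul_eq_mul_div]
        simp only [Matrix.of_apply]
        rw [expand]
        ring
      · intro w z
        rw [hkfi w z, hk_i w z, hkiw w, hkiz z]
        have expand : ∀ a c : Fin N → ℝ,
            ∑ j, ∑ l, a j * (B j l + u j * u l / d) * c l
            = (∑ j, ∑ l, a j * B j l * c l) + (∑ j, a j * u j) * (∑ l, u l * c l) / d := by
          intro a c
          have h1 : ∀ j : Fin N, ∑ l, a j * (B j l + u j * u l / d) * c l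
              = (∑ l, a j * B j l * c l) + (a j * u j / d) * (∑ l, u l * c l) := by
            intro j
            rw [Finset.mul_sum, ← Finset.sum_add_distrib]
            refine Finset.sum_congr rfl fun l _ => ?_; ring
          simp only [h1]
          rw [Finset.sum_add_distrib, ← Finset.sum_mul]
          congr 1
          rw [← Finset.sum_div, div_mul_eq_mul_div]
        simp only [Matrix.of_apply]
        rw [expand]
        ring
  -- conclude
  obtain ⟨B, hBsym, hBsupp, hBK, hm_N, hk_N⟩ := key N le_rfl
  have hBKone : B * K = 1 := by
    ext j l
    rw [Matrix.mul_apply, hBK j l j.isLt l.isLt, Matrix.one_apply]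
  have hKB : K⁻¹ = B := Matrix.inv_eq_left_inv hBKone
  intro w z
  constructor
  · rw [hm_N z, hKB]
    congr 1
    simp only [dotProduct, Matrix.mulVec, dotProduct, Finset.mul_sum]
    refine Finset.sum_congr rfl fun j _ => Finset.sum_congr rfl fun l _ => by ring
  · rw [hk_N w z, hKB]
    congr 1
    simp only [dotProduct, Matrix.mulVec, dotProduct, Finset.mul_sum]
    refine Finset.sum_congr rfl fun j _ => Finset.sum_congr rfl fun l _ => by ring
end
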